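/- Let f(x) = a_d x^d + ... + a_1 x + 1 be a polynomial over ℤ_2 and set A_0 = Σ_{i even, i≠0} a_i and A_1 = Σ_{i odd} a_i. Then the induced map f_{/2} on ℤ/4ℤ has a full cycle if and only if a_1 ≡ 1 mod 2, A_1 ≡ 1 mod 2, and A_0 + A_1 ≡ 1 mod 4. -/
import Mathlib

open Polynomial Finset

private lemma enum4 : ∀ x : ZMod (2 ^ 2), x = 0 ∨ x = 1 ∨ x = 2 ∨ x = 3 := by decide

private lemma valcast4 : ∀ b : ZMod (2 ^ 2), ((b.val : ℕ) : ZMod (2 ^ 2)) = b := by decide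

private lemma no_escape (g : ZMod (2 ^ 2) → ZMod (2 ^ 2)) (S : Set (ZMod (2 ^ 2)))
    (hS : ∀ x ∈ S, g x ∈ S) (a : ZMod (2 ^ 2)) (ha : a ∈ S) (e : ZMod (2 ^ 2)) (he : e ∉ S)
    (h : Set.range (fun k : ℕ => g^[k] a) = Set.univ) : False := by
  have hall : ∀ k : ℕ, g^[k] a ∈ S := by
    intro k
    induction k with
    | zero => exact ha
    | succ k ih => rw [Function.iterate_succ_apply']; exact hS _ ih
  have : e ∈ Set.range (fun k : ℕ => g^[k] a) := h ▸ Set.mem_univ e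
  obtain ⟨k, hk⟩ := this
  exact he (hk ▸ hall k)

private lemma key (g : ZMod (2 ^ 2) → ZMod (2 ^ 2))
    (h : ∀ a : ZMod (2 ^ 2), Set.range (fun k : ℕ => g^[k] a) = Set.univ)
    (h0 : g 0 = 1) :
    (g 1 = 2 ∧ g 2 = 3 ∧ g 3 = 0) ∨ (g 1 = 3 ∧ g 3 = 2 ∧ g 2 = 0) := by
  rcases enum4 (g 1) with hb | hb | hb | hb
  · exact absurd (h 0) (fun hh => no_escape g {x | x = 0 ∨ x = 1}
      (by rintro x (rfl | rfl) <;> simp [h0, hb]) 0 (Or.inl rfl) 2 (by decide) hh)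
  · exact absurd (h 0) (fun hh => no_escape g {x | x = 0 ∨ x = 1}
      (by rintro x (rfl | rfl) <;> simp [h0, hb]) 0 (Or.inl rfl) 2 (by decide) hh)
  · -- g 1 = 2
    rcases enum4 (g 2) with hc | hc | hc | hc
    · exact absurd (h 0) (fun hh => no_escape g {x | x = 0 ∨ x = 1 ∨ x = 2}
        (by rintro x (rfl | rfl | rfl) <;> simp [h0, hb, hc]) 0 (Or.inl rfl) 3 (by decide) hh)
    · exact absurd (h 0) (fun hh => no_escape g {x | x = 0 ∨ x = 1 ∨ x = 2}
        (by rintro x (rfl | rfl | rfl) <;> simp [h0, hb, hc]) 0 (Or.inl rfl) 3 (by decide) hh)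
    · exact absurd (h 0) (fun hh => no_escape g {x | x = 0 ∨ x = 1 ∨ x = 2}
        (by rintro x (rfl | rfl | rfl) <;> simp [h0, hb, hc]) 0 (Or.inl rfl) 3 (by decide) hh)
    · -- g 2 = 3
      rcases enum4 (g 3) with hd | hd | hd | hd
      · exact Or.inl ⟨hb, hc, hd⟩
      · exact absurd (h 1) (fun hh => no_escape g {x | x = 1 ∨ x = 2 ∨ x = 3}
          (by rintro x (rfl | rfl | rfl) <;> simp [hb, hc, hd]) 1 (Or.inl rfl) 0 (by decide) hh)
      · exact absurd (h 2) (fun hh => no_escape g {x | x = 2 ∨ x = 3}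
          (by rintro x (rfl | rfl) <;> simp [hc, hd]) 2 (Or.inl rfl) 0 (by decide) hh)
      · exact absurd (h 3) (fun hh => no_escape g {x | x = 3}
          (by rintro x rfl; simp [hd]) 3 rfl 0 (by decide) hh)
  · -- g 1 = 3
    rcases enum4 (g 3) with hc | hc | hc | hc
    · exact absurd (h 0) (fun hh => no_escape g {x | x = 0 ∨ x = 1 ∨ x = 3}
        (by rintro x (rfl | rfl | rfl) <;> simp [h0, hb, hc]) 0 (Or.inl rfl) 2 (by decide) hh)
    · exact absurd (h 1) (fun hh => no_escape g {x | x = 1 ∨ x = 3}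
        (by rintro x (rfl | rfl) <;> simp [hb, hc]) 1 (Or.inl rfl) 0 (by decide) hh)
    · -- g 3 = 2
      rcases enum4 (g 2) with hd | hd | hd | hd
      · exact Or.inr ⟨hb, hc, hd⟩
      · exact absurd (h 1) (fun hh => no_escape g {x | x = 1 ∨ x = 2 ∨ x = 3}
          (by rintro x (rfl | rfl | rfl) <;> simp [hb, hc, hd]) 1 (Or.inl rfl) 0 (by decide) hh)
      · exact absurd (h 2) (fun hh => no_escape g {x | x = 2}
          (by rintro x rfl; simp [hd]) 2 rfl 0 (by decide) hh)
      · exact absurd (h 2) (fun hh => no_escape g {x | x = 2 ∨ x = 3}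
          (by rintro x (rfl | rfl) <;> simp [hc, hd]) 2 (Or.inl rfl) 0 (by decide) hh)
    · exact absurd (h 3) (fun hh => no_escape g {x | x = 3}
        (by rintro x rfl; simp [hc]) 3 rfl 0 (by decide) hh)

private lemma ker4 (c : ℤ_[2]) (h : PadicInt.toZModPow 2 c = 0) : ∃ z : ℤ_[2], c = 4 * z := by
  have : c ∈ RingHom.ker (PadicInt.toZModPow (p := 2) 2) := h
  rw [PadicInt.ker_toZModPow, Ideal.mem_span_singleton] at this
  obtain ⟨z, hz⟩ := this
  exact ⟨z, by rw [hz]; norm_num⟩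

private lemma mod4_iff (c : ℤ_[2]) :
    (∃ z : ℤ_[2], c = 1 + 4 * z) ↔ PadicInt.toZModPow 2 c = 1 := by
  constructor
  · rintro ⟨z, rfl⟩
    rw [map_add, map_mul, map_one, map_ofNat]
    have h4 : (4 : ZMod (2 ^ 2)) = 0 := by decide
    rw [h4, zero_mul, add_zero]
  · intro hc
    have : PadicInt.toZModPow 2 (c - 1) = 0 := by rw [map_sub, map_one, hc, sub_self]
    obtain ⟨z, hz⟩ := ker4 _ this
    exact ⟨z, by linear_combination hz⟩

private lemma mod2_iff (c : ℤ_[2]) :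
    (∃ z : ℤ_[2], c = 1 + 2 * z) ↔
      (PadicInt.toZModPow 2 c = 1 ∨ PadicInt.toZModPow 2 c = 3) := by
  constructor
  · rintro ⟨z, rfl⟩
    rw [map_add, map_mul, map_one, map_ofNat]
    rcases enum4 (PadicInt.toZModPow 2 z) with h | h | h | h <;> rw [h] <;> decide
  · rintro (hc | hc)
    · obtain ⟨z, hz⟩ := (mod4_iff c).mpr hc
      exact ⟨2 * z, by rw [hz]; ring⟩
    · have : PadicInt.toZModPow 2 (c - 3) = 0 := by
        rw [map_sub, hc, map_ofNat]
        decide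
      obtain ⟨z, hz⟩ := ker4 _ this
      exact ⟨1 + 2 * z, by linear_combination hz⟩

theorem stmt18 (F : Polynomial ℤ_[2]) (h0 : F.coeff 0 = 1) :
    (∀ g : ZMod (2 ^ 2) → ZMod (2 ^ 2),
        (∀ x : ℤ_[2], g (PadicInt.toZModPow 2 x) = PadicInt.toZModPow 2 (F.eval x)) →
          ∀ a : ZMod (2 ^ 2), Set.range (fun k : ℕ => g^[k] a) = Set.univ) ↔
      ((∃ z : ℤ_[2], F.coeff 1 = 1 + 2 * z) ∧
        (∃ z : ℤ_[2],
          (∑ i ∈ Finset.range (F.natDegree + 1), if Odd i then F.coeff i else 0) = 1 + 2 * z) ∧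
        (∃ z : ℤ_[2],
          (∑ i ∈ Finset.range (F.natDegree + 1), if Even i ∧ i ≠ 0 then F.coeff i else 0) +
            (∑ i ∈ Finset.range (F.natDegree + 1), if Odd i then F.coeff i else 0) =
            1 + 4 * z)) := by
  set φ := (PadicInt.toZModPow 2 : ℤ_[2] →+* ZMod (2 ^ 2)) with hφdef
  set d := F.natDegree with hd
  set S0 : ℤ_[2] := ∑ i ∈ Finset.range (d + 1), if Even i ∧ i ≠ 0 then F.coeff i else 0 with hS0
  set S1 : ℤ_[2] := ∑ i ∈ Finset.range (d + 1), if Odd i then F.coeff i else 0 with hS1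
  have hsum : ∀ x : ℤ_[2],
      φ (F.eval x) = ∑ i ∈ Finset.range (d + 1), φ (F.coeff i) * (φ x) ^ i := by
    intro x
    rw [Polynomial.eval_eq_sum_range, map_sum]
    exact Finset.sum_congr rfl fun i _ => by rw [map_mul, map_pow]
  have hpt : ∀ (f : ℕ → ZMod (2 ^ 2)) (i : ℕ), f i =
      (if i = 0 then f i else 0) +
        ((if Even i ∧ i ≠ 0 then f i else 0) + (if Odd i then f i else 0)) := by
    intro f i
    rcases Nat.even_or_odd i with he | ho
    · have hno : ¬Odd i := Nat.not_odd_iff_even.mpr he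
      by_cases hi : i = 0 <;> simp [hi, he, hno]
    · have h0 : i ≠ 0 := by rintro rfl; exact (Nat.not_odd_iff_even.mpr Even.zero) ho
      have hne : ¬Even i := Nat.not_even_iff_odd.mpr ho
      simp [h0, ho, hne]
  have hzero_sum : ∀ f : ℕ → ZMod (2 ^ 2),
      (∑ i ∈ Finset.range (d + 1), if i = 0 then f i else 0) = f 0 := by
    intro f
    rw [Finset.sum_ite_eq', if_pos (Finset.mem_range.mpr (Nat.succ_pos d))]
  have hφc0 : φ (F.coeff 0) = 1 := by rw [h0, map_one]
  have hφS0 : φ S0 = ∑ i ∈ Finset.range (d + 1), if Even i ∧ i ≠ 0 then φ (F.coeff i) else 0 := by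
    rw [hS0, map_sum]
    exact Finset.sum_congr rfl fun i _ => by split <;> simp
  have hφS1 : φ S1 = ∑ i ∈ Finset.range (d + 1), if Odd i then φ (F.coeff i) else 0 := by
    rw [hS1, map_sum]
    exact Finset.sum_congr rfl fun i _ => by split <;> simp
  have hE0 : φ (F.eval 0) = 1 := by
    rw [← Polynomial.coeff_zero_eq_eval_zero, hφc0]
  have hE1 : φ (F.eval 1) = 1 + (φ S0 + φ S1) := by
    rw [hsum 1, map_one]
    calc (∑ i ∈ Finset.range (d + 1), φ (F.coeff i) * (1 : ZMod (2 ^ 2)) ^ i)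
        = ∑ i ∈ Finset.range (d + 1), φ (F.coeff i) := by
          exact Finset.sum_congr rfl fun i _ => by rw [one_pow, mul_one]
      _ = ∑ i ∈ Finset.range (d + 1),
            ((if i = 0 then φ (F.coeff i) else 0) +
              ((if Even i ∧ i ≠ 0 then φ (F.coeff i) else 0) +
                (if Odd i then φ (F.coeff i) else 0))) :=
          Finset.sum_congr rfl fun i _ => hpt (fun j => φ (F.coeff j)) i
      _ = 1 + (φ S0 + φ S1) := by
          rw [Finset.sum_add_distrib, Finset.sum_add_distrib, hzero_sum, hφc0, hφS0, hφS1]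
  have hE2 : φ (F.eval 2) = 1 + 2 * φ (F.coeff 1) := by
    rw [hsum 2, map_ofNat]
    have hpt2 : ∀ i ∈ Finset.range (d + 1), φ (F.coeff i) * (2 : ZMod (2 ^ 2)) ^ i =
        (if i = 0 then φ (F.coeff i) else 0) + (if i = 1 then 2 * φ (F.coeff i) else 0) := by
      intro i _
      match i with
      | 0 => simp
      | 1 => simp [mul_comm]
      | (k + 2) =>
        have h2 : (2 : ZMod (2 ^ 2)) ^ (k + 2) = 0 := by
          rw [pow_add, mul_comm]
          have : (2 : ZMod (2 ^ 2)) ^ 2 = 0 := by decide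
          rw [this, zero_mul]
        simp [h2]
    rw [Finset.sum_congr rfl hpt2, Finset.sum_add_distrib, hzero_sum, hφc0,
      Finset.sum_ite_eq']
    by_cases h1 : 1 ∈ Finset.range (d + 1)
    · rw [if_pos h1]
    · rw [if_neg h1]
      have hdeg : F.natDegree < 1 := by
        rw [Finset.mem_range] at h1
        omega
      rw [Polynomial.coeff_eq_zero_of_natDegree_lt hdeg, map_zero, mul_zero]
  have hE3 : φ (F.eval 3) = 1 + (φ S0 + 3 * φ S1) := by
    rw [hsum 3, map_ofNat]
    have hpt3 : ∀ i ∈ Finset.range (d + 1), φ (F.coeff i) * (3 : ZMod (2 ^ 2)) ^ i =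
        (if i = 0 then φ (F.coeff i) else 0) +
          ((if Even i ∧ i ≠ 0 then φ (F.coeff i) else 0) +
            (if Odd i then 3 * φ (F.coeff i) else 0)) := by
      intro i _
      rcases Nat.even_or_odd i with he | ho
      · have hno : ¬Odd i := Nat.not_odd_iff_even.mpr he
        by_cases hi : i = 0
        · simp [hi]
        · obtain ⟨k, hk⟩ := id he
          have h3 : (3 : ZMod (2 ^ 2)) ^ i = 1 := by
            have hik : i = 2 * k := by omega
            have h9 : (3 : ZMod (2 ^ 2)) ^ 2 = 1 := by decide
            rw [hik, pow_mul, h9, one_pow]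
          simp [hi, he, hno, h3]
      · have h0i : i ≠ 0 := by rintro rfl; exact (Nat.not_odd_iff_even.mpr Even.zero) ho
        have hne : ¬Even i := Nat.not_even_iff_odd.mpr ho
        obtain ⟨k, hk⟩ := id ho
        have h3 : (3 : ZMod (2 ^ 2)) ^ i = 3 := by
          have h9 : (3 : ZMod (2 ^ 2)) ^ 2 = 1 := by decide
          rw [hk, pow_add, pow_mul, h9, one_pow, pow_one, one_mul]
        simp [h0i, ho, hne, h3, mul_comm]
    rw [Finset.sum_congr rfl hpt3, Finset.sum_add_distrib, Finset.sum_add_distrib,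
      hzero_sum, hφc0, hφS0]
    have : (∑ i ∈ Finset.range (d + 1), if Odd i then 3 * φ (F.coeff i) else 0) = 3 * φ S1 := by
      rw [hφS1, Finset.mul_sum]
      exact Finset.sum_congr rfl fun i _ => by split <;> simp
    rw [this]
  -- the canonical induced map
  set gF : ZMod (2 ^ 2) → ZMod (2 ^ 2) := fun a => (F.map φ).eval a with hgF
  have hcompat : ∀ x : ℤ_[2], gF (φ x) = φ (F.eval x) := by
    intro x
    rw [hgF]
    simp only [Polynomial.eval_map]
    exact Polynomial.eval₂_hom φ x
  have hgF0 : gF 0 = 1 := by rw [← map_zero φ, hcompat, hE0]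
  have hgF1 : gF 1 = 1 + (φ S0 + φ S1) := by
    have := hcompat 1
    rw [map_one] at this
    rw [this, hE1]
  have hgF2 : gF 2 = 1 + 2 * φ (F.coeff 1) := by
    have := hcompat 2
    rw [map_ofNat] at this
    rw [this, hE2]
  have hgF3 : gF 3 = 1 + (φ S0 + 3 * φ S1) := by
    have := hcompat 3
    rw [map_ofNat] at this
    rw [this, hE3]
  have h40 : (4 : ZMod (2 ^ 2)) = 0 := by decide
  constructor
  · intro H
    have horb := H gF hcompat
    rcases key gF horb hgF0 with ⟨h1, h2, h3⟩ | ⟨h1, h3, h2⟩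
    · rw [hgF1] at h1
      rw [hgF2] at h2
      rw [hgF3] at h3
      have hx1 : 2 * φ (F.coeff 1) = 2 := by linear_combination h2
      have hs1 : 2 * φ S1 = 2 := by linear_combination h3 - h1 - h40
      have hs01 : φ S0 + φ S1 = 1 := by linear_combination h1
      refine ⟨?_, ?_, ?_⟩
      · exact (mod2_iff _).mpr
          ((by decide : ∀ x : ZMod (2 ^ 2), 2 * x = 2 → x = 1 ∨ x = 3) _ hx1)
      · exact (mod2_iff _).mpr
          ((by decide : ∀ x : ZMod (2 ^ 2), 2 * x = 2 → x = 1 ∨ x = 3) _ hs1)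
      · refine (mod4_iff _).mpr ?_
        rw [map_add]
        exact hs01
    · rw [hgF2] at h2
      have hx1 : 2 * φ (F.coeff 1) = 3 := by linear_combination h2 - h40
      exact absurd hx1 ((by decide : ∀ x : ZMod (2 ^ 2), ¬(2 * x = 3)) _)
  · rintro ⟨hc1, hcS1, hcS01⟩ g hg a
    have hx1 : 2 * φ (F.coeff 1) = 2 := by
      rcases (mod2_iff _).mp hc1 with h | h <;> rw [hφdef, h] <;> decide
    have hs1 : 2 * φ S1 = 2 := by
      rcases (mod2_iff _).mp hcS1 with h | h <;> rw [hφdef, h] <;> decide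
    have hs01 : φ S0 + φ S1 = 1 := by
      have := (mod4_iff _).mp hcS01
      rw [← map_add] at *
      exact this
    have hgeq : ∀ b : ZMod (2 ^ 2), g b = gF b := by
      intro b
      obtain ⟨x, hx⟩ : ∃ x : ℤ_[2], φ x = b := ⟨((b.val : ℕ) : ℤ_[2]), by
        rw [map_natCast]; exact valcast4 b⟩
      rw [← hx, hg x, ← hcompat x]
    have hg0 : g 0 = 1 := by rw [hgeq, hgF0]
    have hg1 : g 1 = 2 := by
      rw [hgeq, hgF1, hs01]
      decide
    have hg2 : g 2 = 3 := by
      rw [hgeq, hgF2]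
      linear_combination hx1
    have hg3 : g 3 = 0 := by
      rw [hgeq, hgF3]
      linear_combination hs01 + hs1 + h40
    have gstep : ∀ b : ZMod (2 ^ 2), g b = b + 1 := by
      intro b
      rcases enum4 b with rfl | rfl | rfl | rfl
      · rw [hg0]; decide
      · rw [hg1]; decide
      · rw [hg2]; decide
      · rw [hg3]; decide
    have hiter : ∀ (k : ℕ) (b : ZMod (2 ^ 2)), g^[k] b = b + (k : ZMod (2 ^ 2)) := by
      intro k
      induction k with
      | zero => intro b; simp
      | succ k ih =>
        intro b
        rw [Function.iterate_succ_apply', ih, gstep]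
        push_cast
        ring
    ext b
    simp only [Set.mem_range, Set.mem_univ, iff_true]
    exact ⟨(b - a).val, by rw [hiter, valcast4]; ring⟩
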